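/- Let P and Q be orthogonal projections on a Hilbert space with Q - P in the Schatten class J_{2n+3} for some n ≥ 0. Then tr((Q-P)^{2n+3}) = tr((Q-P)^{2n+1}) whenever Q - P ∈ J_{2n+1}. -/

import Mathlib

open scoped InnerProductSpace
open ContinuousLinearMap in
/-- Sum over a Hilbert basis of `⟨e i, |T|^p (e i)⟩`, where `|T|^p = (T†T)^{p/2}`
is defined by the continuous functional calculus. -/
noncomputable def schattenSum {H : Type*} [NormedAddCommGroup H] [InnerProductSpace ℂ H]
    [CompleteSpace H] {ι : Type*} (b : HilbertBasis ι ℂ H) (p : ℝ) (T : H →L[ℂ] H) : ℝ :=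
  ∑' i, (⟪b i, (cfc (fun x : ℝ => x ^ (p / 2)) (adjoint T * T)) (b i)⟫_ℂ).re

open ContinuousLinearMap in
/-- `T` belongs to the Schatten ideal `J_p` (w.r.t. the basis `b`). -/
def MemSchatten {H : Type*} [NormedAddCommGroup H] [InnerProductSpace ℂ H]
    [CompleteSpace H] {ι : Type*} (b : HilbertBasis ι ℂ H) (p : ℝ) (T : H →L[ℂ] H) : Prop :=
  Summable fun i => (⟪b i, (cfc (fun x : ℝ => x ^ (p / 2)) (adjoint T * T)) (b i)⟫_ℂ).re

/-- The Schatten `p`-norm. -/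
noncomputable def schattenNorm {H : Type*} [NormedAddCommGroup H] [InnerProductSpace ℂ H]
    [CompleteSpace H] {ι : Type*} (b : HilbertBasis ι ℂ H) (p : ℝ) (T : H →L[ℂ] H) : ℝ :=
  (schattenSum b p T) ^ (1 / p)

/-- The trace, evaluated in the Hilbert basis `b`. -/
noncomputable def traceB {H : Type*} [NormedAddCommGroup H] [InnerProductSpace ℂ H]
    [CompleteSpace H] {ι : Type*} (b : HilbertBasis ι ℂ H) (T : H →L[ℂ] H) : ℂ :=
  ∑' i, ⟪b i, T (b i)⟫_ℂ


namespace Stmt5Aux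

open ContinuousLinearMap

variable {H : Type*} [NormedAddCommGroup H] [InnerProductSpace ℂ H] [CompleteSpace H]
  {ι : Type*} (b : HilbertBasis ι ℂ H)

/-- Hilbert-Schmidt w.r.t. the basis `b` (column-major matrix entries). -/
def HSb (T : H →L[ℂ] H) : Prop :=
  Summable fun ij : ι × ι => ‖⟪b ij.2, T (b ij.1)⟫_ℂ‖ ^ 2

lemma col_hasSum (x : H) : HasSum (fun i => ‖⟪b i, x⟫_ℂ‖ ^ 2) (‖x‖ ^ 2) := by
  have h := (b.hasSum_inner_mul_inner x x).mapL Complex.reCLM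
  have h1 : ∀ i : ι, Complex.reCLM (⟪x, b i⟫_ℂ * ⟪b i, x⟫_ℂ) = ‖⟪b i, x⟫_ℂ‖ ^ 2 := by
    intro i
    have e1 : ⟪x, b i⟫_ℂ * ⟪b i, x⟫_ℂ = (Complex.normSq ⟪b i, x⟫_ℂ : ℂ) := by
      rw [← inner_conj_symm (b i) x, Complex.mul_conj, Complex.normSq_conj]
    simp [e1, Complex.normSq_eq_norm_sq, ← Complex.ofReal_pow]
  have h2 : Complex.reCLM ⟪x, x⟫_ℂ = ‖x‖ ^ 2 := by
    simpa using inner_self_eq_norm_sq (𝕜 := ℂ) x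
  rw [← h2]
  exact h.congr_fun (fun i => (h1 i).symm)

lemma hs_iff {T : H →L[ℂ] H} : HSb b T ↔ Summable fun j => ‖T (b j)‖ ^ 2 := by
  rw [HSb, summable_prod_of_nonneg (fun p => by positivity)]
  have hcol : ∀ j, HasSum (fun i => ‖⟪b i, T (b j)⟫_ℂ‖ ^ 2) (‖T (b j)‖ ^ 2) :=
    fun j => col_hasSum b (T (b j))
  constructor
  · rintro ⟨-, h2⟩
    refine h2.congr fun j => ?_
    exact (hcol j).tsum_eq
  · intro h
    refine ⟨fun j => (hcol j).summable, h.congr fun j => ?_⟩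
    exact (hcol j).tsum_eq.symm

lemma hs_adjoint {T : H →L[ℂ] H} (hT : HSb b T) : HSb b (adjoint T) := by
  unfold HSb at *
  have := (Equiv.prodComm ι ι).summable_iff.mpr hT
  refine this.congr fun p => ?_
  simp only [Function.comp, Equiv.prodComm_apply, Prod.snd_swap, Prod.fst_swap]
  rw [ContinuousLinearMap.adjoint_inner_right, norm_inner_symm]

lemma hs_lmul {T : H →L[ℂ] H} (A : H →L[ℂ] H) (hT : HSb b T) : HSb b (A * T) := by
  rw [hs_iff] at hT ⊢
  refine Summable.of_nonneg_of_le (fun j => by positivity) (fun j => ?_) (hT.mul_left (‖A‖^2))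
  have h1 : ‖(A * T) (b j)‖ ≤ ‖A‖ * ‖T (b j)‖ := by
    rw [ContinuousLinearMap.mul_apply]
    exact A.le_opNorm _
  calc ‖(A * T) (b j)‖ ^ 2 ≤ (‖A‖ * ‖T (b j)‖) ^ 2 := by
        apply pow_le_pow_left₀ (norm_nonneg _) h1
  _ = ‖A‖ ^ 2 * ‖T (b j)‖ ^ 2 := by ring

lemma hs_rmul {T : H →L[ℂ] H} (A : H →L[ℂ] H) (hT : HSb b T) : HSb b (T * A) := by
  have h1 : HSb b (adjoint A * adjoint T) := hs_lmul b _ (hs_adjoint b hT)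
  have e : adjoint (T * A) = adjoint A * adjoint T := by
    rw [← star_eq_adjoint, star_mul, star_eq_adjoint, star_eq_adjoint]
  have h2 := hs_adjoint b h1
  rwa [← e, ContinuousLinearMap.adjoint_adjoint] at h2

lemma diag_hasSum (Y Z : H →L[ℂ] H) (i : ι) :
    HasSum (fun j => ⟪b i, Y (b j)⟫_ℂ * ⟪b j, Z (b i)⟫_ℂ) ⟪b i, (Y * Z) (b i)⟫_ℂ := by
  have h := b.hasSum_inner_mul_inner (adjoint Y (b i)) (Z (b i))
  have e : ∀ j, ⟪adjoint Y (b i), b j⟫_ℂ * ⟪b j, Z (b i)⟫_ℂ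
      = ⟪b i, Y (b j)⟫_ℂ * ⟪b j, Z (b i)⟫_ℂ := by
    intro j
    rw [ContinuousLinearMap.adjoint_inner_left]
  have e2 : ⟪adjoint Y (b i), Z (b i)⟫_ℂ = ⟪b i, (Y * Z) (b i)⟫_ℂ := by
    rw [ContinuousLinearMap.adjoint_inner_left, ContinuousLinearMap.mul_apply]
  rw [e2] at h
  exact h.congr_fun fun j => (e j).symm

lemma summable_F {Y Z : H →L[ℂ] H} (hY : HSb b Y) (hZ : HSb b Z) :
    Summable fun p : ι × ι => ‖⟪b p.1, Y (b p.2)⟫_ℂ * ⟪b p.2, Z (b p.1)⟫_ℂ‖ := by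
  have hY' : Summable fun p : ι × ι => ‖⟪b p.1, Y (b p.2)⟫_ℂ‖ ^ 2 := by
    have := (Equiv.prodComm ι ι).summable_iff.mpr hY
    exact this.congr fun p => rfl
  have hB : Summable fun p : ι × ι =>
      (‖⟪b p.1, Y (b p.2)⟫_ℂ‖ ^ 2 + ‖⟪b p.2, Z (b p.1)⟫_ℂ‖ ^ 2) / 2 :=
    (hY'.add hZ).div_const 2
  refine Summable.of_nonneg_of_le (fun p => norm_nonneg _) (fun p => ?_) hB
  rw [norm_mul]
  nlinarith [norm_nonneg (⟪b p.1, Y (b p.2)⟫_ℂ), norm_nonneg (⟪b p.2, Z (b p.1)⟫_ℂ),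
    sq_nonneg (‖⟪b p.1, Y (b p.2)⟫_ℂ‖ - ‖⟪b p.2, Z (b p.1)⟫_ℂ‖)]

lemma trace_summable {Y Z : H →L[ℂ] H} (hY : HSb b Y) (hZ : HSb b Z) :
    Summable fun i => ⟪b i, (Y * Z) (b i)⟫_ℂ := by
  have hFn := summable_F b hY hZ
  have hrow := (summable_prod_of_nonneg (f := fun p : ι × ι =>
    ‖⟪b p.1, Y (b p.2)⟫_ℂ * ⟪b p.2, Z (b p.1)⟫_ℂ‖) (fun p => norm_nonneg _)).mp hFn
  refine Summable.of_norm (Summable.of_nonneg_of_le (fun i => norm_nonneg _) (fun i => ?_) hrow.2)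
  rw [← (diag_hasSum b Y Z i).tsum_eq]
  exact norm_tsum_le_tsum_norm (hrow.1 i)

lemma trace_comm {Y Z : H →L[ℂ] H} (hY : HSb b Y) (hZ : HSb b Z) :
    ∑' i, ⟪b i, (Y * Z) (b i)⟫_ℂ = ∑' i, ⟪b i, (Z * Y) (b i)⟫_ℂ := by
  have hF : Summable fun p : ι × ι => ⟪b p.1, Y (b p.2)⟫_ℂ * ⟪b p.2, Z (b p.1)⟫_ℂ :=
    Summable.of_norm (summable_F b hY hZ)
  have hG : Summable fun p : ι × ι => ⟪b p.1, Z (b p.2)⟫_ℂ * ⟪b p.2, Y (b p.1)⟫_ℂ :=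
    Summable.of_norm (summable_F b hZ hY)
  have e1 : ∑' i, ⟪b i, (Y * Z) (b i)⟫_ℂ
      = ∑' p : ι × ι, ⟪b p.1, Y (b p.2)⟫_ℂ * ⟪b p.2, Z (b p.1)⟫_ℂ := by
    rw [Summable.tsum_prod' hF fun i => hF.prod_factor i]
    exact tsum_congr fun i => ((diag_hasSum b Y Z i).tsum_eq).symm
  have e2 : ∑' i, ⟪b i, (Z * Y) (b i)⟫_ℂ
      = ∑' p : ι × ι, ⟪b p.1, Z (b p.2)⟫_ℂ * ⟪b p.2, Y (b p.1)⟫_ℂ := by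
    rw [Summable.tsum_prod' hG fun i => hG.prod_factor i]
    exact tsum_congr fun i => ((diag_hasSum b Z Y i).tsum_eq).symm
  rw [e1, e2]
  rw [← (Equiv.prodComm ι ι).tsum_eq (fun p : ι × ι => ⟪b p.1, Z (b p.2)⟫_ℂ * ⟪b p.2, Y (b p.1)⟫_ℂ)]
  exact tsum_congr fun p => mul_comm _ _

lemma cont_mul_abs_rpow (c : ℝ) (hc : 0 < c) :
    Continuous fun x : ℝ => x * |x| ^ (c - 1) := by
  rw [continuous_iff_continuousAt]
  intro x
  rcases eq_or_ne x 0 with rfl | hx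
  · have key : Filter.Tendsto (fun x : ℝ => x * |x| ^ (c - 1)) (nhds 0) (nhds 0) := by
      apply squeeze_zero_norm (a := fun x : ℝ => |x| ^ c)
      · intro t
        rcases eq_or_ne t 0 with rfl | ht
        · simp [Real.zero_rpow hc.ne']
        · have habs : (0:ℝ) < |t| := abs_pos.mpr ht
          have e : ‖t * |t| ^ (c - 1)‖ = |t| * |t| ^ (c - 1) := by
            rw [norm_mul, Real.norm_eq_abs, Real.norm_eq_abs,
              abs_of_nonneg (Real.rpow_nonneg (abs_nonneg t) _)]
          rw [e]
          have e2 : |t| * |t| ^ (c - 1) = |t| ^ c := by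
            calc |t| * |t| ^ (c - 1) = |t| ^ (1:ℝ) * |t| ^ (c - 1) := by rw [Real.rpow_one]
            _ = |t| ^ (1 + (c - 1)) := (Real.rpow_add habs _ _).symm
            _ = |t| ^ c := by norm_num
          rw [e2]
      · have hcont : Continuous fun x : ℝ => |x| ^ c :=
          (Real.continuous_rpow_const hc.le).comp continuous_abs
        have h0 := hcont.tendsto 0
        simpa [Real.zero_rpow hc.ne'] using h0
    simpa [ContinuousAt] using key
  · have h1 : ContinuousAt (fun y : ℝ => |y| ^ (c - 1)) x :=
      (Real.continuousAt_rpow_const _ _ (Or.inl (abs_ne_zero.mpr hx))).comp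
        continuous_abs.continuousAt
    exact continuousAt_id.mul h1

open ContinuousLinearMap in
lemma key_factor (D : H →L[ℂ] H) (hD : IsSelfAdjoint D) (n : ℕ)
    (h1 : Summable fun i =>
      (⟪b i, (cfc (fun x : ℝ => x ^ ((2 * (n:ℝ) + 1) / 2)) (adjoint D * D)) (b i)⟫_ℂ).re) :
    ∃ Y Z : H →L[ℂ] H, HSb b Y ∧ HSb b Z ∧ Y * Z = D ^ (2 * n + 1) := by
  set c : ℝ := (2 * (n:ℝ) + 1) / 2 with hc_def
  have hc : 0 < c := by positivity
  set f : ℝ → ℝ := fun x => x * |x| ^ (c - 1) with hf_def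
  set g : ℝ → ℝ := fun x => |x| ^ c with hg_def
  have hfc : Continuous f := cont_mul_abs_rpow c hc
  have hgc : Continuous g := (Real.continuous_rpow_const hc.le).comp continuous_abs
  have habs2 : ∀ x : ℝ, x * x = |x| ^ (2:ℝ) := by
    intro x
    rw [show (2:ℝ) = ((2:ℕ):ℝ) by norm_num, Real.rpow_natCast, sq_abs, sq]
  have hff : ∀ x : ℝ, f x * f x = |x| ^ (2 * c) := by
    intro x
    rcases eq_or_ne x 0 with rfl | hx
    · simp [hf_def, Real.zero_rpow (by positivity : (2:ℝ) * c ≠ 0)]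
    · have habs : (0:ℝ) < |x| := abs_pos.mpr hx
      have e1 : f x * f x = (x * x) * (|x| ^ (c-1) * |x| ^ (c-1)) := by simp only [hf_def]; ring
      rw [e1, ← Real.rpow_add habs, habs2 x, ← Real.rpow_add habs]
      congr 1
      ring
  have hgg : ∀ x : ℝ, g x * g x = |x| ^ (2 * c) := by
    intro x
    rcases eq_or_ne x 0 with rfl | hx
    · simp [hg_def, Real.zero_rpow hc.ne', Real.zero_rpow (by positivity : (2:ℝ) * c ≠ 0)]
    · have habs : (0:ℝ) < |x| := abs_pos.mpr hx
      rw [hg_def, ← Real.rpow_add habs]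
      congr 1
      ring
  have hfg : ∀ x : ℝ, f x * g x = x ^ (2 * n + 1) := by
    intro x
    rcases eq_or_ne x 0 with rfl | hx
    · simp [hf_def, zero_pow (by omega : 2 * n + 1 ≠ 0)]
    · have habs : (0:ℝ) < |x| := abs_pos.mpr hx
      have e1 : f x * g x = x * (|x| ^ (c-1) * |x| ^ c) := by simp only [hf_def, hg_def]; ring
      rw [e1, ← Real.rpow_add habs]
      have e2 : c - 1 + c = ((2 * n : ℕ) : ℝ) := by push_cast [hc_def]; ring
      rw [e2, Real.rpow_natCast, Even.pow_abs ⟨n, by ring⟩, ← pow_succ']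
  -- identify the cfc operator from the hypothesis
  have hDD : adjoint D * D = cfc (fun x : ℝ => x * x) D := by
    calc adjoint D * D = D * D := by rw [hD.adjoint_eq]
    _ = cfc (fun x : ℝ => x) D * cfc (fun x : ℝ => x) D := by rw [cfc_id' ℝ D]
    _ = cfc (fun x : ℝ => x * x) D := (cfc_mul _ _ D).symm
  have hcfc_eq : cfc (fun x : ℝ => x ^ ((2 * (n:ℝ) + 1) / 2)) (adjoint D * D)
      = cfc (fun x : ℝ => |x| ^ (2 * c)) D := by
    have hgcont : ContinuousOn (fun x : ℝ => x ^ ((2 * (n:ℝ) + 1) / 2))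
        ((fun x : ℝ => x * x) '' spectrum ℝ D) :=
      (Real.continuous_rpow_const (by positivity)).continuousOn
    have hfcont : ContinuousOn (fun x : ℝ => x * x) (spectrum ℝ D) :=
      (continuous_id.mul continuous_id).continuousOn
    rw [hDD, ← cfc_comp' (fun x : ℝ => x ^ ((2 * (n:ℝ) + 1) / 2)) (fun x : ℝ => x * x) D
      hgcont hfcont]
    refine cfc_congr fun x _ => ?_
    show (x * x) ^ ((2 * (n:ℝ) + 1) / 2) = |x| ^ (2 * c)
    rw [hc_def, habs2 x, ← Real.rpow_mul (abs_nonneg x)]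
  rw [hcfc_eq] at h1
  -- HS for cfc f D and cfc g D
  have hnorm : ∀ (h : ℝ → ℝ), Continuous h → (∀ x, h x * h x = |x| ^ (2 * c)) →
      HSb b (cfc h D) := by
    intro h hhc hh
    rw [hs_iff]
    have hsa : IsSelfAdjoint (cfc h D) := cfc_predicate h D
    have hmul : cfc h D * cfc h D = cfc (fun x : ℝ => |x| ^ (2 * c)) D := by
      rw [← cfc_mul h h D hhc.continuousOn hhc.continuousOn]
      exact cfc_congr fun x _ => hh x
    refine h1.congr fun j => ?_
    rw [← hmul, ContinuousLinearMap.mul_apply]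
    have e2 : ⟪b j, (cfc h D) ((cfc h D) (b j))⟫_ℂ
        = ⟪(cfc h D) (b j), (cfc h D) (b j)⟫_ℂ := by
      rw [← ContinuousLinearMap.adjoint_inner_left (cfc h D), hsa.adjoint_eq]
    rw [e2, inner_self_eq_norm_sq_to_K]
    simp [← Complex.ofReal_pow]
  refine ⟨cfc f D, cfc g D, hnorm f hfc hff, hnorm g hgc hgg, ?_⟩
  rw [← cfc_mul f g D hfc.continuousOn hgc.continuousOn, ← cfc_pow_id (R := ℝ) D (2 * n + 1) hD]
  exact cfc_congr fun x _ => hfg x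

end Stmt5Aux

/-- For orthogonal projections `P, Q` with `Q - P ∈ J_{2n+3}` and `Q - P ∈ J_{2n+1}`,
`tr (Q-P)^{2n+3} = tr (Q-P)^{2n+1}`. -/
theorem stmt5 {H : Type*} [NormedAddCommGroup H] [InnerProductSpace ℂ H] [CompleteSpace H]
    {ι : Type*} (b : HilbertBasis ι ℂ H) (P Q : H →L[ℂ] H)
    (hP : IsSelfAdjoint P) (hP2 : P ^ 2 = P) (hQ : IsSelfAdjoint Q) (hQ2 : Q ^ 2 = Q)
    (n : ℕ) (h3 : MemSchatten b (2 * n + 3) (Q - P)) (h1 : MemSchatten b (2 * n + 1) (Q - P)) :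
    traceB b ((Q - P) ^ (2 * n + 3)) = traceB b ((Q - P) ^ (2 * n + 1)) := by
  classical
  have hp : P * P = P := by rw [← sq, hP2]
  have hq : Q * Q = Q := by rw [← sq, hQ2]
  set D : H →L[ℂ] H := Q - P with hD_def
  set E : H →L[ℂ] H := 1 - P - Q with hE_def
  have hD : IsSelfAdjoint D := hQ.sub hP
  have expand1 : E * D = Q * P - P * Q := by
    simp only [hE_def, hD_def, sub_mul, mul_sub, one_mul, mul_one, hp, hq]
    abel
  have expand2 : D * E = P * Q - Q * P := by
    simp only [hE_def, hD_def, sub_mul, mul_sub, one_mul, mul_one, hp, hq]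
    abel
  have hED : E * D = -(D * E) := by rw [expand1, expand2, neg_sub]
  have hBB : E * E = 1 - D * D := by
    simp only [hE_def, hD_def, sub_mul, mul_sub, one_mul, mul_one, hp, hq]
    abel
  have hcomm : E * (D * D) = (D * D) * E := by
    calc E * (D * D) = (E * D) * D := (mul_assoc _ _ _).symm
    _ = (-(D * E)) * D := by rw [hED]
    _ = -(D * (E * D)) := by rw [neg_mul, mul_assoc]
    _ = -(D * (-(D * E))) := by rw [hED]
    _ = (D * D) * E := by rw [mul_neg, neg_neg, mul_assoc]
  have hcomm' : Commute E (D * D) := hcomm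
  have hpowcomm : E * (D * D) ^ n = (D * D) ^ n * E := (hcomm'.pow_right n).eq
  set X : H →L[ℂ] H := D ^ (2 * n + 1) with hX_def
  have hanti : E * X = -(X * E) := by
    have e : X = (D * D) ^ n * D := by rw [hX_def, pow_succ, pow_mul, sq]
    rw [e, ← mul_assoc, hpowcomm, mul_assoc, hED, mul_neg, ← mul_assoc]
  obtain ⟨Y, Z, hY, hZ, hYZ⟩ := Stmt5Aux.key_factor b D hD n h1
  rw [← hX_def] at hYZ
  have hsZE : Stmt5Aux.HSb b (Z * E) := Stmt5Aux.hs_rmul b E hZ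
  have hsZEE : Stmt5Aux.HSb b ((Z * E) * E) := Stmt5Aux.hs_rmul b E hsZE
  have hsEY : Stmt5Aux.HSb b (E * Y) := Stmt5Aux.hs_lmul b E hY
  have S1 : Summable fun i => ⟪b i, X (b i)⟫_ℂ := by
    have := Stmt5Aux.trace_summable b hY hZ
    rwa [hYZ] at this
  have S2 : Summable fun i => ⟪b i, (X * (E * E)) (b i)⟫_ℂ := by
    have := Stmt5Aux.trace_summable b hY hsZEE
    rwa [show Y * ((Z * E) * E) = X * (E * E) by rw [← hYZ]; noncomm_ring] at this
  have e1 : X * (E * E) = Y * ((Z * E) * E) := by rw [← hYZ]; noncomm_ring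
  have e2 : ((Z * E) * E) * Y = (Z * E) * (E * Y) := by noncomm_ring
  have e3 : (E * Y) * (Z * E) = -(X * (E * E)) := by
    have h' : (E * Y) * (Z * E) = (E * X) * E := by rw [← hYZ]; noncomm_ring
    rw [h', hanti]
    noncomm_ring
  have t0 : ∑' i, ⟪b i, (X * (E * E)) (b i)⟫_ℂ = 0 := by
    have c1 : ∑' i, ⟪b i, (X * (E * E)) (b i)⟫_ℂ
        = ∑' i, ⟪b i, (((Z * E) * E) * Y) (b i)⟫_ℂ := by
      rw [e1]
      exact Stmt5Aux.trace_comm b hY hsZEE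
    have c2 : ∑' i, ⟪b i, (((Z * E) * E) * Y) (b i)⟫_ℂ
        = ∑' i, ⟪b i, ((E * Y) * (Z * E)) (b i)⟫_ℂ := by
      rw [e2]
      exact Stmt5Aux.trace_comm b hsZE hsEY
    have c3 : ∑' i, ⟪b i, ((E * Y) * (Z * E)) (b i)⟫_ℂ
        = -∑' i, ⟪b i, (X * (E * E)) (b i)⟫_ℂ := by
      rw [e3, ← tsum_neg]
      exact tsum_congr fun i => by rw [ContinuousLinearMap.neg_apply, inner_neg_right]
    have hself : ∑' i, ⟪b i, (X * (E * E)) (b i)⟫_ℂ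
        = -∑' i, ⟪b i, (X * (E * E)) (b i)⟫_ℂ := c1.trans (c2.trans c3)
    linear_combination hself / 2
  have hDD2 : D * D = 1 - E * E := by rw [hBB, sub_sub_cancel]
  have eop : D ^ (2 * n + 3) = X - X * (E * E) := by
    have hexp : 2 * n + 3 = (2 * n + 1) + 2 := by ring
    calc D ^ (2 * n + 3) = D ^ (2 * n + 1) * D ^ 2 := by rw [hexp, pow_add]
    _ = X * (D * D) := by rw [← hX_def, sq]
    _ = X * (1 - E * E) := by rw [hDD2]
    _ = X - X * (E * E) := by rw [mul_sub, mul_one]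
  calc traceB b (D ^ (2 * n + 3))
      = ∑' i, ⟪b i, (X - X * (E * E)) (b i)⟫_ℂ := by rw [traceB, eop]
  _ = ∑' i, (⟪b i, X (b i)⟫_ℂ - ⟪b i, (X * (E * E)) (b i)⟫_ℂ) :=
      tsum_congr fun i => by rw [ContinuousLinearMap.sub_apply, inner_sub_right]
  _ = (∑' i, ⟪b i, X (b i)⟫_ℂ) - ∑' i, ⟪b i, (X * (E * E)) (b i)⟫_ℂ := Summable.tsum_sub S1 S2
  _ = traceB b X := by rw [t0, sub_zero, traceB]
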